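/- Let β ≥ 0 and let a, b, c, d be nonnegative real numbers with b > 0, d > 0, a ≤ b, c ≤ d, a ≤ c and b − a ≤ d − c. Then d·F_β(c/d) − b·F_β(a/b) ≤ 0. -/
import Mathlib


/-- `f_β(u) = (e^{-2β}(1-2u) + √(1 + (e^{-4β}-1)(1-2u)²)) / (2(1-u))`. -/
noncomputable def fBeta (β u : ℝ) : ℝ :=
  (Real.exp (-2*β) * (1-2*u) + Real.sqrt (1 + (Real.exp (-4*β) - 1) * (1-2*u)^2)) / (2*(1-u))

/-- `F_β(t) = ∫_0^{min(t,1-t)} log f_β(u) du`. -/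
noncomputable def FBeta (β t : ℝ) : ℝ :=
  ∫ u in (0:ℝ)..(min t (1-t)), Real.log (fBeta β u)

lemma exp_four_eq (β : ℝ) : Real.exp (-4*β) = Real.exp (-2*β) ^ 2 := by
  rw [sq, ← Real.exp_add]; ring_nf

lemma fBeta_pos {β u : ℝ} (hβ : 0 ≤ β) (h0 : 0 ≤ u) (h1 : u ≤ 1/2) : 0 < fBeta β u := by
  have hE : 0 < Real.exp (-2*β) := Real.exp_pos _
  have hE1 : Real.exp (-2*β) ≤ 1 := Real.exp_le_one_iff.mpr (by linarith)
  unfold fBeta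
  rw [exp_four_eq]
  set E := Real.exp (-2*β)
  have hs2 : (1-2*u)^2 ≤ 1 := by nlinarith
  have hK : E^2 ≤ 1 := by nlinarith
  have harg : E^2 ≤ 1 + (E^2 - 1) * (1-2*u)^2 := by
    nlinarith [mul_nonneg (sub_nonneg.mpr hs2) (sub_nonneg.mpr hK)]
  have hsq : 0 < Real.sqrt (1 + (E^2 - 1) * (1-2*u)^2) :=
    Real.sqrt_pos.mpr (by nlinarith)
  apply div_pos _ (by linarith)
  have : 0 ≤ E * (1-2*u) := mul_nonneg hE.le (by linarith)
  linarith

lemma fBeta_le_one {β u : ℝ} (hβ : 0 ≤ β) (h0 : 0 ≤ u) (h1 : u ≤ 1/2) : fBeta β u ≤ 1 := by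
  have hE : 0 < Real.exp (-2*β) := Real.exp_pos _
  have hE1 : Real.exp (-2*β) ≤ 1 := Real.exp_le_one_iff.mpr (by linarith)
  unfold fBeta
  rw [exp_four_eq]
  set E := Real.exp (-2*β)
  set s := 1 - 2*u with hs
  have hs0 : 0 ≤ s := by simp [hs]; linarith
  have hs1 : s ≤ 1 := by simp [hs]; linarith
  have hsqle : Real.sqrt (1 + (E^2 - 1) * s^2) ≤ 1 + (1-E)*s := by
    have h2 : 1 + (E^2 - 1) * s^2 ≤ (1 + (1-E)*s)^2 := by nlinarith
    calc Real.sqrt (1 + (E^2 - 1) * s^2) ≤ Real.sqrt ((1 + (1-E)*s)^2) :=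
          Real.sqrt_le_sqrt h2
      _ = 1 + (1-E)*s := Real.sqrt_sq (by nlinarith)
  rw [div_le_one (by linarith)]
  nlinarith

lemma fBeta_mono {β u v : ℝ} (hβ : 0 ≤ β) (h0 : 0 ≤ u) (huv : u ≤ v) (hv : v ≤ 1/2) :
    fBeta β u ≤ fBeta β v := by
  have hE : 0 < Real.exp (-2*β) := Real.exp_pos _
  have hE1 : Real.exp (-2*β) ≤ 1 := Real.exp_le_one_iff.mpr (by linarith)
  unfold fBeta
  rw [exp_four_eq]
  set E := Real.exp (-2*β)
  set s := 1 - 2*u with hsdef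
  set t := 1 - 2*v with htdef
  have ht0 : 0 ≤ t := by simp [htdef]; linarith
  have hts : t ≤ s := by simp [hsdef, htdef]; linarith
  have hs1 : s ≤ 1 := by simp [hsdef]; linarith
  set R := Real.sqrt (1 + (E^2 - 1) * s^2) with hRdef
  set R' := Real.sqrt (1 + (E^2 - 1) * t^2) with hR'def
  have hK : E^2 ≤ 1 := by nlinarith
  have hst2 : t^2 ≤ s^2 := by nlinarith
  have hs2 : s^2 ≤ 1 := by nlinarith
  have hRR' : R ≤ R' := Real.sqrt_le_sqrt
    (by nlinarith [mul_nonneg (sub_nonneg.mpr hst2) (sub_nonneg.mpr hK)])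
  have hRE : E ≤ R := by
    have h2 : E^2 ≤ 1 + (E^2 - 1) * s^2 := by
      nlinarith [mul_nonneg (sub_nonneg.mpr hs2) (sub_nonneg.mpr hK)]
    calc E = Real.sqrt (E^2) := (Real.sqrt_sq hE.le).symm
      _ ≤ R := Real.sqrt_le_sqrt h2
  have hR0 : 0 ≤ R := Real.sqrt_nonneg _
  have hnum : 2*(1-u) = 1 + s := by simp [hsdef]; ring
  have hnum' : 2*(1-v) = 1 + t := by simp [htdef]; ring
  rw [div_le_div_iff₀ (by linarith) (by linarith), hnum, hnum']
  nlinarith [mul_nonneg (sub_nonneg.mpr hRE) (sub_nonneg.mpr hts),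
    mul_nonneg (sub_nonneg.mpr hRR') (by linarith : (0:ℝ) ≤ 1 + s)]

lemma logf_contOn (β : ℝ) (hβ : 0 ≤ β) :
    ContinuousOn (fun u => Real.log (fBeta β u)) (Set.Icc (0:ℝ) (1/2)) := by
  have hf : ContinuousOn (fBeta β) (Set.Icc (0:ℝ) (1/2)) := by
    apply ContinuousOn.div
    · exact (Continuous.add (by continuity)
        ((Real.continuous_sqrt).comp (by continuity))).continuousOn
    · exact (by continuity : Continuous fun u : ℝ => 2*(1-u)).continuousOn
    · intro x hx
      have : x ≤ 1/2 := hx.2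
      intro h; nlinarith [h]
  exact hf.log (fun x hx => (fBeta_pos hβ hx.1 hx.2).ne')

/-- scaled version of FBeta -/
lemma FBeta_scale (β : ℝ) {x y : ℝ} (hy : 0 < y) :
    y * FBeta β (x/y) = ∫ v in (0:ℝ)..(min x (y-x)), Real.log (fBeta β (v/y)) := by
  unfold FBeta
  rw [intervalIntegral.integral_comp_div (fun u => Real.log (fBeta β u)) hy.ne']
  rw [zero_div, smul_eq_mul]
  congr 2
  rw [← min_div_div_right hy.le, sub_div, div_self hy.ne']

/-- if `0 ≤ a ≤ b`, `0 ≤ c ≤ d`, `a ≤ c` and `b - a ≤ d - c`, with `b, d > 0`,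
then `d·F_β(c/d) − b·F_β(a/b) ≤ 0` for every `β ≥ 0`. -/
theorem dFbeta_sub_bFbeta_nonpos (β a b c d : ℝ) (hβ : 0 ≤ β)
    (ha : 0 ≤ a) (hb : 0 < b) (hc : 0 ≤ c) (hd : 0 < d)
    (hab : a ≤ b) (hcd : c ≤ d) (hac : a ≤ c) (hba : b - a ≤ d - c) :
    d * FBeta β (c/d) - b * FBeta β (a/b) ≤ 0 := by
  set m := min a (b-a) with hm
  set m' := min c (d-c) with hm'
  have hbd : b ≤ d := by linarith
  have hm0 : 0 ≤ m := le_min ha (by linarith)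
  have hmm' : m ≤ m' := le_min ((min_le_left a (b-a)).trans hac)
    ((min_le_right a (b-a)).trans hba)
  have hmb : 2*m ≤ b := by
    have h1 := min_le_left a (b-a); have h2 := min_le_right a (b-a); rw [hm]; linarith
  have hm'd : 2*m' ≤ d := by
    have h1 := min_le_left c (d-c); have h2 := min_le_right c (d-c); rw [hm']; linarith
  -- continuity of the composed integrands on relevant intervals
  have hcomp : ∀ (y z : ℝ), 0 < y → 2*z ≤ y → 0 ≤ z →
      ContinuousOn (fun v => Real.log (fBeta β (v/y))) (Set.Icc (0:ℝ) z) := by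
    intro y z hy hzy hz
    apply (logf_contOn β hβ).comp (by fun_prop : Continuous fun v : ℝ => v / y).continuousOn
    intro v hv
    exact Set.mem_Icc.mpr ⟨div_nonneg hv.1 hy.le, by rw [div_le_iff₀ hy]; linarith [hv.2]⟩
  have hint_d1 : IntervalIntegrable (fun v => Real.log (fBeta β (v/d))) MeasureTheory.volume 0 m := by
    apply ContinuousOn.intervalIntegrable
    rw [Set.uIcc_of_le hm0]
    exact (hcomp d m' hd hm'd (hm0.trans hmm')).mono (Set.Icc_subset_Icc le_rfl hmm')
  have hint_d2 : IntervalIntegrable (fun v => Real.log (fBeta β (v/d))) MeasureTheory.volume m m' := by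
    apply ContinuousOn.intervalIntegrable
    rw [Set.uIcc_of_le hmm']
    exact (hcomp d m' hd hm'd (hm0.trans hmm')).mono (Set.Icc_subset_Icc hm0 le_rfl)
  have hint_b : IntervalIntegrable (fun v => Real.log (fBeta β (v/b))) MeasureTheory.volume 0 m := by
    apply ContinuousOn.intervalIntegrable
    rw [Set.uIcc_of_le hm0]
    exact hcomp b m hb hmb hm0
  rw [sub_nonpos, FBeta_scale β hd, FBeta_scale β hb]
  have hsplit : (∫ v in (0:ℝ)..m', Real.log (fBeta β (v/d)))
      = (∫ v in (0:ℝ)..m, Real.log (fBeta β (v/d)))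
        + ∫ v in m..m', Real.log (fBeta β (v/d)) :=
    (intervalIntegral.integral_add_adjacent_intervals hint_d1 hint_d2).symm
  rw [hsplit]
  have h1 : (∫ v in (0:ℝ)..m, Real.log (fBeta β (v/d)))
      ≤ ∫ v in (0:ℝ)..m, Real.log (fBeta β (v/b)) := by
    apply intervalIntegral.integral_mono_on hm0 hint_d1 hint_b
    intro v hv
    have hv0 : 0 ≤ v := hv.1
    have hvd : 0 ≤ v/d := div_nonneg hv0 hd.le
    have hdb : v/d ≤ v/b := by gcongr
    have hvb : v/b ≤ 1/2 := by rw [div_le_iff₀ hb]; linarith [hv.2]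
    exact Real.log_le_log (fBeta_pos hβ hvd (le_trans hdb hvb)) (fBeta_mono hβ hvd hdb hvb)
  have h2 : (∫ v in m..m', Real.log (fBeta β (v/d))) ≤ 0 := by
    have : (∫ v in m..m', Real.log (fBeta β (v/d)))
        ≤ ∫ _v in m..m', (0:ℝ) := by
      apply intervalIntegral.integral_mono_on hmm' hint_d2 intervalIntegrable_const
      intro v hv
      have hv0 : 0 ≤ v := hm0.trans hv.1
      have hvd : 0 ≤ v/d := div_nonneg hv0 hd.le
      have hvd2 : v/d ≤ 1/2 := by rw [div_le_iff₀ hd]; linarith [hv.2]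
      exact Real.log_nonpos (fBeta_pos hβ hvd hvd2).le (fBeta_le_one hβ hvd hvd2)
    simpa using this
  linarith
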